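/- Let f_t > 0, s_t > 0, μ > 0, let n_{−w}, …, n_w be positive reals with center value n_0 and total n_w^{tot} = Σ_{i=−w}^{w} n_i, and let γ_f ≥ 0 and γ_σ ≥ 0. Let m_w ∈ ℝ and v_w ≥ 0 satisfy |m_w/μ − f_t| ≤ γ_f·f_t and v_w ≤ (1/n_w^{tot})·(1 + γ_σ)·s_t. Assume √((n_0/n_w^{tot})·(1 + γ_σ)) < 1. Then for every λ ≥ γ_f/(1 − √((n_0/n_w^{tot})·(1 + γ_σ))): N(m_w, v_w)({x ∈ ℝ : |x/μ − f_t| ≥ λ·f_t}) ≤ N(μ·f_t, s_t/n_0)({x ∈ ℝ : |x/μ − f_t| ≥ λ·f_t}). -/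

import Mathlib

open ProbabilityTheory MeasureTheory
open scoped NNReal

lemma gauss_affine_aux (m : ℝ) (v : ℝ≥0) (s : Set ℝ) (hs : MeasurableSet s) :
    gaussianReal m v s = gaussianReal 0 1 ((fun x => Real.sqrt v * x + m) ⁻¹' s) := by
  have hσ : (⟨(Real.sqrt v)^2, sq_nonneg _⟩ : ℝ≥0) * 1 = v := by
    rw [mul_one]
    ext
    simp [Real.sq_sqrt v.coe_nonneg]
  have h1 : (gaussianReal 0 1).map (fun x => Real.sqrt v * x) = gaussianReal 0 v := by
    have := gaussianReal_map_const_mul (μ := 0) (v := 1) (Real.sqrt v)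
    simpa [hσ] using this
  have h2 : (gaussianReal 0 v).map (· + m) = gaussianReal m v := by
    simpa using gaussianReal_map_add_const (μ := 0) (v := v) m
  have hmap : (gaussianReal 0 1).map (fun x => Real.sqrt v * x + m) = gaussianReal m v := by
    rw [← h2, ← h1]
    exact (Measure.map_map (measurable_add_const m) (measurable_const_mul _)).symm
  rw [← hmap]
  exact Measure.map_apply ((measurable_const_mul _).add_const m) hs

lemma gauss_Ici (m : ℝ) (v : ℝ≥0) (hv : (0:ℝ) < v) (t : ℝ) :
    gaussianReal m v (Set.Ici t) = gaussianReal 0 1 (Set.Ici ((t - m) / Real.sqrt v)) := by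
  rw [gauss_affine_aux m v _ measurableSet_Ici]
  congr 1
  have hσ : 0 < Real.sqrt v := Real.sqrt_pos.mpr hv
  ext x
  simp only [Set.mem_preimage, Set.mem_Ici]
  rw [div_le_iff₀ hσ, mul_comm]
  constructor <;> intro h <;> linarith

lemma gauss_Iic (m : ℝ) (v : ℝ≥0) (hv : (0:ℝ) < v) (t : ℝ) :
    gaussianReal m v (Set.Iic t) = gaussianReal 0 1 (Set.Iic ((t - m) / Real.sqrt v)) := by
  rw [gauss_affine_aux m v _ measurableSet_Iic]
  congr 1
  have hσ : 0 < Real.sqrt v := Real.sqrt_pos.mpr hv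
  ext x
  simp only [Set.mem_preimage, Set.mem_Iic]
  rw [le_div_iff₀ hσ, mul_comm]
  constructor <;> intro h <;> linarith

set_option maxHeartbeats 1000000 in
/-- Paper Theorem 8 (stronger smoothing guarantee when the variance of the
response counts is small), for the Gaussian approximations furnished by the
CLT. -/
theorem smoothing_better_small_count_variance (ft st μ : ℝ)
    (hft : 0 < ft) (hst : 0 < st) (hμ : 0 < μ)
    (w : ℕ) (hw : 1 ≤ w)
    (n : ℤ → ℝ) (hn : ∀ i ∈ Finset.Icc (-(w : ℤ)) (w : ℤ), 0 < n i)
    (ntot : ℝ) (hntot : ntot = ∑ i ∈ Finset.Icc (-(w : ℤ)) (w : ℤ), n i)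
    (γf γσ : ℝ) (hγf : 0 ≤ γf) (hγσ : 0 ≤ γσ)
    (mw vw : ℝ) (hvw0 : 0 ≤ vw)
    (hmean : |mw / μ - ft| ≤ γf * ft)
    (hvar : vw ≤ (1 / ntot) * (1 + γσ) * st)
    (hratio : Real.sqrt ((n 0 / ntot) * (1 + γσ)) < 1) :
    ∀ lam : ℝ, γf / (1 - Real.sqrt ((n 0 / ntot) * (1 + γσ))) ≤ lam →
      gaussianReal mw vw.toNNReal {x : ℝ | |x / μ - ft| ≥ lam * ft} ≤
      gaussianReal (μ * ft) ((st / n 0).toNNReal)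
        {x : ℝ | |x / μ - ft| ≥ lam * ft} := by
  intro lam hlam
  set r : ℝ := Real.sqrt ((n 0 / ntot) * (1 + γσ)) with hr
  -- positivity facts
  have h0mem : (0:ℤ) ∈ Finset.Icc (-(w : ℤ)) (w : ℤ) := by
    simp only [Finset.mem_Icc]
    constructor <;> omega
  have hn0 : 0 < n 0 := hn 0 h0mem
  have hntot_pos : 0 < ntot := by
    rw [hntot]
    exact Finset.sum_pos hn ⟨0, h0mem⟩
  have hrpos : 0 < r := Real.sqrt_pos.mpr (by positivity)
  have h1r : 0 < 1 - r := by linarith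
  have hlam0 : 0 ≤ lam := le_trans (by positivity) hlam
  have hγflam : γf ≤ lam * (1 - r) := by
    rw [div_le_iff₀ h1r] at hlam; exact hlam
  -- the event rewritten
  set a : ℝ := μ * (lam * ft) with ha
  have ha0 : 0 ≤ a := by positivity
  have hE : {x : ℝ | |x / μ - ft| ≥ lam * ft} = {x : ℝ | a ≤ |x - μ * ft|} := by
    ext x
    simp only [Set.mem_setOf_eq, ge_iff_le]
    have h1 : x / μ - ft = (x - μ * ft) / μ := by field_simp
    have : |x / μ - ft| = |x - μ * ft| / μ := by rw [h1, abs_div, abs_of_pos hμ]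
    rw [this, le_div_iff₀ hμ, ha]
    constructor <;> intro h <;> nlinarith
  rw [hE]
  -- mean deviation bound
  have hmean' : |mw - μ * ft| ≤ (1 - r) * a := by
    have h1 : mw / μ - ft = (mw - μ * ft) / μ := by field_simp
    have : |mw / μ - ft| = |mw - μ * ft| / μ := by rw [h1, abs_div, abs_of_pos hμ]
    rw [this, div_le_iff₀ hμ] at hmean
    have h2 : γf * ft * μ ≤ lam * (1 - r) * ft * μ := by
      have := mul_le_mul_of_nonneg_right (mul_le_mul_of_nonneg_right hγflam hft.le) hμ.le
      linarith
    nlinarith [abs_nonneg (mw - μ * ft)]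
  rcases eq_or_lt_of_le hlam0 with hlam0' | hlampos
  · -- lam = 0 : the event is everything
    have : {x : ℝ | a ≤ |x - μ * ft|} = Set.univ := by
      ext x
      simp only [Set.mem_setOf_eq, Set.mem_univ, iff_true]
      have : a = 0 := by rw [ha, ← hlam0']; ring
      rw [this]; exact abs_nonneg _
    rw [this]
    simp
  have hapos : 0 < a := by positivity
  -- split event as union of two rays
  have hEsplit : {x : ℝ | a ≤ |x - μ * ft|} =
      Set.Iic (μ * ft - a) ∪ Set.Ici (μ * ft + a) := by
    ext x
    simp only [Set.mem_setOf_eq, Set.mem_union, Set.mem_Iic, Set.mem_Ici]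
    rw [le_abs]
    constructor
    · rintro (h | h)
      · right; linarith
      · left; linarith
    · rintro (h | h)
      · right; linarith
      · left; linarith
  rw [hEsplit]
  -- variance bound for reference gaussian
  have hstn0 : 0 < st / n 0 := by positivity
  have hv0coe : ((st / n 0).toNNReal : ℝ) = st / n 0 := Real.coe_toNNReal _ hstn0.le
  set σ0 : ℝ := Real.sqrt (st / n 0) with hσ0
  have hσ0pos : 0 < σ0 := Real.sqrt_pos.mpr hstn0
  have hRHS : gaussianReal (μ * ft) ((st / n 0).toNNReal)
      (Set.Iic (μ * ft - a) ∪ Set.Ici (μ * ft + a)) =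
      gaussianReal 0 1 (Set.Iic (-(a / σ0))) + gaussianReal 0 1 (Set.Ici (a / σ0)) := by
    rw [measure_union (by
        apply Set.disjoint_left.mpr
        intro x hx1 hx2
        simp only [Set.mem_Iic, Set.mem_Ici] at hx1 hx2
        linarith) measurableSet_Ici]
    rw [gauss_Iic _ _ (by rw [hv0coe]; exact hstn0), gauss_Ici _ _ (by rw [hv0coe]; exact hstn0)]
    rw [hv0coe]
    congr 2 <;> rw [← hσ0] <;> ring
  rw [hRHS]
  -- case on variance
  rcases eq_or_lt_of_le hvw0 with hvw' | hvwpos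
  · -- vw = 0 : dirac measure, point not in event
    have : vw.toNNReal = 0 := by simp [← hvw']
    rw [this, gaussianReal_zero_var]
    have hmeas : MeasurableSet (Set.Iic (μ * ft - a) ∪ Set.Ici (μ * ft + a)) :=
      measurableSet_Iic.union measurableSet_Ici
    rw [Measure.dirac_apply' _ hmeas]
    have hnot : mw ∉ Set.Iic (μ * ft - a) ∪ Set.Ici (μ * ft + a) := by
      simp only [Set.mem_union, Set.mem_Iic, Set.mem_Ici]
      push_neg
      have := abs_le.mp hmean'
      constructor <;> nlinarith
    rw [Set.indicator_of_notMem hnot]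
    exact zero_le
  -- vw > 0 : standardize and compare
  have hvwcoe : ((vw.toNNReal : ℝ)) = vw := Real.coe_toNNReal _ hvw0
  set σν : ℝ := Real.sqrt vw with hσν
  have hσνpos : 0 < σν := Real.sqrt_pos.mpr hvwpos
  have hσνle : σν ≤ r * σ0 := by
    have hvwle : vw ≤ (r * σ0) ^ 2 := by
      have hr2 : r ^ 2 = (n 0 / ntot) * (1 + γσ) := Real.sq_sqrt (by positivity)
      have hσ02 : σ0 ^ 2 = st / n 0 := Real.sq_sqrt hstn0.le
      have : (r * σ0) ^ 2 = (1 / ntot) * (1 + γσ) * st := by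
        rw [mul_pow, hr2, hσ02]
        field_simp
      rw [this]; exact hvar
    calc σν = Real.sqrt vw := rfl
      _ ≤ Real.sqrt ((r * σ0) ^ 2) := Real.sqrt_le_sqrt hvwle
      _ = r * σ0 := Real.sqrt_sq (by positivity)
  -- key bounds on standardized thresholds
  have hkey : a / σ0 ≤ (r * a) / σν := by
    calc a / σ0 = (r * a) / (r * σ0) := by
          rw [mul_div_mul_left _ _ hrpos.ne']
      _ ≤ (r * a) / σν := by
          apply div_le_div_of_nonneg_left (by positivity) hσνpos hσνle
  have habs := abs_le.mp hmean'
  have hright : a / σ0 ≤ (μ * ft + a - mw) / σν := by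
    refine hkey.trans ?_
    apply div_le_div_of_nonneg_right ?_ hσνpos.le
    nlinarith
  have hleft : (μ * ft - a - mw) / σν ≤ -(a / σ0) := by
    have h1 : (μ * ft - a - mw) / σν ≤ -((r * a) / σν) := by
      rw [← neg_div]
      apply div_le_div_of_nonneg_right ?_ hσνpos.le
      nlinarith
    have h2 : -((r * a) / σν) ≤ -(a / σ0) := neg_le_neg hkey
    linarith
  -- conclude
  calc gaussianReal mw vw.toNNReal (Set.Iic (μ * ft - a) ∪ Set.Ici (μ * ft + a))
      ≤ gaussianReal mw vw.toNNReal (Set.Iic (μ * ft - a)) +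
        gaussianReal mw vw.toNNReal (Set.Ici (μ * ft + a)) := measure_union_le _ _
    _ = gaussianReal 0 1 (Set.Iic ((μ * ft - a - mw) / σν)) +
        gaussianReal 0 1 (Set.Ici ((μ * ft + a - mw) / σν)) := by
        rw [gauss_Iic _ _ (by rw [hvwcoe]; exact hvwpos),
          gauss_Ici _ _ (by rw [hvwcoe]; exact hvwpos), hvwcoe]
    _ ≤ gaussianReal 0 1 (Set.Iic (-(a / σ0))) + gaussianReal 0 1 (Set.Ici (a / σ0)) := by
        exact add_le_add (measure_mono (Set.Iic_subset_Iic.mpr hleft))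
          (measure_mono (Set.Ici_subset_Ici.mpr hright))
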